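/- arXiv:1507.03376 — 4 statements merged into one kernel-verified Lean document; each statement's English description precedes it below -/
import Mathlib

section
/- If G is a connected graph, then the cube of G (the graph on the same vertex set where two distinct vertices are adjacent iff their distance in G is at most 3) contains a Hamiltonian cycle. -/
open SimpleGraph Relation List

/-- The cube of a graph: same vertex set, distinct vertices adjacent iff
their distance in `G` is at most 3. -/
def SimpleGraph.cube {V : Type*} (G : SimpleGraph V) : SimpleGraph V :=
  SimpleGraph.fromRel (fun u v => G.dist u v ≤ 3)

section Helpers

variable {V : Type*}

/-- Reachability within a finset `s` via `G`-edges whose endpoints lie in `s`. -/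
def RIn (G : SimpleGraph V) (s : Finset V) : V → V → Prop :=
  Relation.ReflTransGen (fun a b => G.Adj a b ∧ a ∈ s ∧ b ∈ s)


lemma rin_of_walk (G : SimpleGraph V) [Fintype V] {a b : V} (w : G.Walk a b) :
    RIn G Finset.univ a b := by
  induction w with
  | nil => exact Relation.ReflTransGen.refl
  | cons h p ih =>
    exact Relation.ReflTransGen.head ⟨h, Finset.mem_univ _, Finset.mem_univ _⟩ ih

lemma exists_walk_of_chain (H : SimpleGraph V) :
    ∀ (l : List V) (a c : V), l.Chain' H.Adj → l.head? = some a → l.getLast? = some c →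
    ∃ w : H.Walk a c, w.support = l := by
  intro l
  induction l with
  | nil => intro a c _ h; simp at h
  | cons x u ih =>
    intro a c hch hh hl
    have hxa : x = a := by simpa using hh
    subst hxa
    cases u with
    | nil =>
      have : x = c := by simpa using hl
      subst this
      exact ⟨SimpleGraph.Walk.nil, rfl⟩
    | cons b u' =>
      have hadj : H.Adj x b := (List.isChain_cons_cons.mp hch).1
      have hch' : (b :: u').Chain' H.Adj := (List.isChain_cons_cons.mp hch).2
      have hl' : (b :: u').getLast? = some c := by
        rwa [List.getLast?_cons_cons] at hl
      obtain ⟨w', hw'⟩ := ih b c hch' rfl hl'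
      exact ⟨SimpleGraph.Walk.cons hadj w', by simp [hw']⟩

open scoped Classical in
/-- Sekanina's key lemma, finset form. -/
lemma sekanina [DecidableEq V] (G : SimpleGraph V) (hG : G.Connected) :
    ∀ (n : ℕ) (s : Finset V), s.card ≤ n → ∀ r ∈ s, (∀ x ∈ s, RIn G s r x) →
    ∃ l : List V, l.Nodup ∧ l.toFinset = s ∧ l.head? = some r ∧
      l.Chain' (fun a b => a ≠ b ∧ G.dist a b ≤ 3) ∧
      ∀ z, l.getLast? = some z → z = r ∨ G.Adj r z := by
  intro n
  induction n with
  | zero =>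
    intro s hs r hr _
    simp [Finset.card_eq_zero.mp (Nat.le_zero.mp hs)] at hr
  | succ n ih =>
    intro s hs r hr hcon
    by_cases hsing : ∀ x ∈ s, x = r
    · -- s = {r}
      refine ⟨[r], by simp, ?_, by simp, List.isChain_singleton r, by simp⟩
      ext a
      simp only [List.toFinset_cons, List.toFinset_nil, LawfulSingleton.insert_empty_eq, Finset.mem_singleton]
      exact ⟨fun h => h ▸ hr, fun h => hsing a h⟩
    · push_neg at hsing
      obtain ⟨x, hxs, hxr⟩ := hsing
      -- first step from r
      obtain hcase | ⟨c, hrc, _⟩ := Relation.ReflTransGen.cases_head (hcon x hxs)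
      · exact absurd hcase.symm hxr
      obtain ⟨hadjrc, _, hcs⟩ := hrc
      have hcr : c ≠ r := fun h => G.irrefl (h ▸ hadjrc)
      set t : Finset V := s.erase r with ht
      have hct : c ∈ t := Finset.mem_erase.mpr ⟨hcr, hcs⟩
      set s1 : Finset V := t.filter (fun y => RIn G t c y) with hs1
      have hcs1 : c ∈ s1 := Finset.mem_filter.mpr ⟨hct, Relation.ReflTransGen.refl⟩
      set s' : Finset V := s \ s1 with hs'
      have hs1t : s1 ⊆ t := Finset.filter_subset _ _
      have hs1s : s1 ⊆ s := hs1t.trans (Finset.erase_subset _ _)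
      have hrs1 : r ∉ s1 := fun h => (Finset.mem_erase.mp (hs1t h)).1 rfl
      have hrs' : r ∈ s' := Finset.mem_sdiff.mpr ⟨hr, hrs1⟩
      -- claim A : connectivity within s1
      have claimA : ∀ y, RIn G t c y → RIn G s1 c y := by
        intro y hy
        induction hy with
        | refl => exact Relation.ReflTransGen.refl
        | @tail b y hcb hstep ihh =>
          have hbs1 : b ∈ s1 := Finset.mem_filter.mpr ⟨hstep.2.1, hcb⟩
          have hys1 : y ∈ s1 := Finset.mem_filter.mpr ⟨hstep.2.2, hcb.tail hstep⟩
          exact ihh.tail ⟨hstep.1, hbs1, hys1⟩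
      -- claim B : connectivity within s'
      have claimB : ∀ y, RIn G s r y → y ∈ s1 ∨ (y ∈ s' ∧ RIn G s' r y) := by
        intro y hy
        induction hy with
        | refl => exact Or.inr ⟨hrs', Relation.ReflTransGen.refl⟩
        | @tail b y hrb hstep ihh =>
          by_cases hy1 : y ∈ s1
          · exact Or.inl hy1
          by_cases hyr : y = r
          · exact Or.inr ⟨hyr ▸ hrs', hyr ▸ Relation.ReflTransGen.refl⟩
          have hyt : y ∈ t := Finset.mem_erase.mpr ⟨hyr, hstep.2.2⟩
          rcases ihh with hb1 | ⟨hbs', hrb'⟩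
          · exfalso
            have hbt : b ∈ t := hs1t hb1
            have : RIn G t c y :=
              (Finset.mem_filter.mp hb1).2.tail ⟨hstep.1, hbt, hyt⟩
            exact hy1 (Finset.mem_filter.mpr ⟨hyt, this⟩)
          · have hys' : y ∈ s' := Finset.mem_sdiff.mpr ⟨hstep.2.2, hy1⟩
            exact Or.inr ⟨hys', hrb'.tail ⟨hstep.1, hbs', hys'⟩⟩
      -- cards
      have htcard : t.card ≤ n := by
        have : t.card = s.card - 1 := by rw [ht]; exact Finset.card_erase_of_mem hr
        have hpos : 1 ≤ s.card := Finset.card_pos.mpr ⟨r, hr⟩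
        omega
      have hs1card : s1.card ≤ n := le_trans (Finset.card_le_card hs1t) htcard
      have hs'card : s'.card ≤ n := by
        have hsub : s' ⊆ s.erase c := by
          intro a ha
          refine Finset.mem_erase.mpr ⟨fun h => ?_, (Finset.mem_sdiff.mp ha).1⟩
          exact (Finset.mem_sdiff.mp ha).2 (h ▸ hcs1)
        have h1 : (s.erase c).card = s.card - 1 := Finset.card_erase_of_mem hcs
        have h2 := Finset.card_le_card hsub
        have hpos : 1 ≤ s.card := Finset.card_pos.mpr ⟨r, hr⟩
        omega
      -- IH applications
      obtain ⟨l1, hl1nd, hl1fin, hl1h, hl1ch, hl1last⟩ :=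
        ih s1 hs1card c hcs1 (fun y hy => claimA y (Finset.mem_filter.mp hy).2)
      obtain ⟨l', hl'nd, hl'fin, hl'h, hl'ch, hl'last⟩ :=
        ih s' hs'card r hrs' (fun y hy => by
          rcases claimB y (hcon y (Finset.mem_sdiff.mp hy).1) with h1 | ⟨_, h2⟩
          · exact absurd h1 (Finset.mem_sdiff.mp hy).2
          · exact h2)
      -- combine
      have hl'ne : l' ≠ [] := by
        intro h; rw [h] at hl'h; simp at hl'h
      have hl1ne : l1 ≠ [] := by
        intro h; rw [h] at hl1h; simp at hl1h
      have hdisj : ∀ a ∈ l', a ∉ l1 := by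
        intro a ha ha1
        have h1 : a ∈ s' := hl'fin ▸ List.mem_toFinset.mpr ha
        have h2 : a ∈ s1 := hl1fin ▸ List.mem_toFinset.mpr ha1
        exact (Finset.mem_sdiff.mp h1).2 h2
      refine ⟨l' ++ l1.reverse, ?_, ?_, ?_, ?_, ?_⟩
      · exact List.nodup_append'.mpr ⟨hl'nd, List.nodup_reverse.mpr hl1nd, by
          intro a ha hb; exact hdisj a ha (List.mem_reverse.mp hb)⟩
      · rw [List.toFinset_append, List.toFinset_reverse, hl'fin, hl1fin]
        exact Finset.sdiff_union_of_subset hs1s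
      · rw [List.head?_append, hl'h]; rfl
      · rw [List.Chain', List.isChain_append]
        refine ⟨hl'ch, ?_, ?_⟩
        · rw [List.isChain_reverse]
          refine hl1ch.imp fun a b h => ⟨h.1.symm, ?_⟩
          rw [G.dist_comm]; exact h.2
        · intro x hx y hy
          rw [List.head?_reverse] at hy
          have hxr1 : G.dist x r ≤ 1 := by
            rcases hl'last x hx with h | h
            · simp [h, SimpleGraph.dist_self]
            · rw [G.dist_comm]
              exact le_of_eq (SimpleGraph.dist_eq_one_iff_adj.mpr h)
          have hcy : G.dist c y ≤ 1 := by
            rcases hl1last y hy with h | h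
            · simp [h, SimpleGraph.dist_self]
            · exact le_of_eq (SimpleGraph.dist_eq_one_iff_adj.mpr h)
          have hrc1 : G.dist r c ≤ 1 := le_of_eq (SimpleGraph.dist_eq_one_iff_adj.mpr hadjrc)
          constructor
          · intro hxy
            exact hdisj x (List.mem_of_mem_getLast? hx)
              (hxy ▸ List.mem_of_mem_getLast? hy)
          · calc G.dist x y ≤ G.dist x c + G.dist c y := hG.dist_triangle
              _ ≤ (G.dist x r + G.dist r c) + G.dist c y :=
                  add_le_add_left hG.dist_triangle _
              _ ≤ 1 + 1 + 1 := by
                  exact add_le_add (add_le_add hxr1 hrc1) hcy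
              _ = 3 := rfl
      · intro z hz
        rw [List.getLast?_append, List.getLast?_reverse, hl1h] at hz
        have hzc : c = z := by simpa using hz
        exact Or.inr (hzc ▸ hadjrc)


lemma not_first_edge (H : SimpleGraph V) :
    ∀ {a b : V} (w : H.Walk a b), w.support.Nodup → 2 ≤ w.length → s(a, b) ∉ w.edges := by
  intro a b w
  cases w with
  | nil => intro _ h; simp at h
  | @cons _ x _ h p =>
    intro hnd hlen hmem
    rw [SimpleGraph.Walk.support_cons, List.nodup_cons] at hnd
    rcases (by simpa using hmem : (b = x ∨ a = x ∧ b = a) ∨ s(a, b) ∈ p.edges) with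
      (hbx | ⟨hax, _⟩) | hmem'
    · subst hbx
      cases p with
      | nil => simp at hlen
      | cons h2 q =>
        rw [SimpleGraph.Walk.support_cons, List.nodup_cons] at hnd
        exact hnd.2.1 (q.end_mem_support)
    · exact h.ne hax
    · exact hnd.1 (p.fst_mem_support_of_mem_edges hmem')

end Helpers

/-- If `G` is a finite connected graph with at least 3 vertices, then `G³`
contains a Hamiltonian cycle. -/
theorem cube_hamiltonian_cycle {V : Type*} [Fintype V] [DecidableEq V]
    (G : SimpleGraph V) (hG : G.Connected) (h3 : 3 ≤ Fintype.card V) :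
    ∃ (v : V) (c : G.cube.Walk v v), c.IsHamiltonianCycle := by
  have hpos : 0 < Fintype.card V := by omega
  obtain ⟨r⟩ : Nonempty V := Fintype.card_pos_iff.mp hpos
  obtain ⟨l, hnd, hfin, hh, hch, hlast⟩ :=
    sekanina G hG (Fintype.card V) Finset.univ (by simp) r (Finset.mem_univ r)
      (fun x _ => rin_of_walk G (hG r x).some)
  have hlen : l.length = Fintype.card V := by
    rw [← List.toFinset_card_of_nodup hnd, hfin, Finset.card_univ]
  obtain ⟨u, rfl⟩ : ∃ u, l = r :: u := by
    cases l with
    | nil => simp at hh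
    | cons a u =>
      have : a = r := by simpa using hh
      exact ⟨u, by rw [this]⟩
  have hune : u ≠ [] := by
    intro h; rw [h] at hlen; simp at hlen; omega
  obtain ⟨z, hz⟩ : ∃ z, u.getLast? = some z := by
    cases hu : u.getLast? with
    | none => exact absurd (List.getLast?_eq_none_iff.mp hu) hune
    | some z => exact ⟨z, rfl⟩
  have hzlast : (r :: u).getLast? = some z := by
    rw [List.getLast?_cons, hz]; rfl
  have hru : r ∉ u := (List.nodup_cons.mp hnd).1
  have hzr : z ≠ r := fun h => hru (h ▸ List.mem_of_mem_getLast? hz)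
  have hadjrz : G.Adj r z := (hlast z hzlast).resolve_left hzr
  -- cube adjacency chain
  have hch' : (r :: u).Chain' G.cube.Adj := by
    refine hch.imp fun a b h => ?_
    rw [SimpleGraph.cube, SimpleGraph.fromRel_adj]
    exact ⟨h.1, Or.inl h.2⟩
  obtain ⟨w, hw⟩ := exists_walk_of_chain G.cube (r :: u) r z hch' rfl hzlast
  have hwnd : w.support.Nodup := hw ▸ hnd
  have hwpath : w.IsPath := (SimpleGraph.Walk.isPath_def w).mpr hwnd
  have hadj' : G.cube.Adj r z := by
    rw [SimpleGraph.cube, SimpleGraph.fromRel_adj]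
    refine ⟨hzr.symm, Or.inl ?_⟩
    calc G.dist r z = 1 := SimpleGraph.dist_eq_one_iff_adj.mpr hadjrz
      _ ≤ 3 := by norm_num
  have hwlen : 2 ≤ w.length := by
    have := w.length_support
    rw [hw] at this
    simp only [List.length_cons] at this
    have : u.length = w.length := by omega
    have hul : (r :: u).length = Fintype.card V := hlen
    simp only [List.length_cons] at hul
    omega
  have hne : s(r, z) ∉ w.edges := not_first_edge _ w hwnd hwlen
  refine ⟨r, SimpleGraph.Walk.cons hadj' w.reverse, ?_⟩
  rw [SimpleGraph.Walk.isHamiltonianCycle_iff_isCycle_and_support_count_tail_eq_one]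
  constructor
  · refine (SimpleGraph.Walk.cons_isCycle_iff w.reverse hadj').mpr ⟨hwpath.reverse, ?_⟩
    rw [SimpleGraph.Walk.edges_reverse, List.mem_reverse]
    exact hne
  · intro a
    rw [SimpleGraph.Walk.support_cons, List.tail_cons, SimpleGraph.Walk.support_reverse, hw]
    refine List.count_eq_one_of_mem (List.nodup_reverse.mpr hnd) ?_
    rw [List.mem_reverse]
    have : a ∈ (r :: u).toFinset := hfin ▸ Finset.mem_univ a
    exact List.mem_toFinset.mp this
end

section
/- If G is a connected graph with n vertices, then there exists an enumeration v_1, v_2, ..., v_n of the vertices of G such that dist_G(v_i, v_{i+1}) ≤ 3 for all 1 ≤ i < n. -/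
open List in
private lemma walk_avoid {V : Type*} [DecidableEq V] (G : SimpleGraph V)
    (S C : Finset V) (u : V) (huS : u ∈ S) (huC : u ∉ C)
    (hclose : ∀ a b, G.Adj a b → b ∈ C → a ∈ S → a ≠ u → a ∈ C) :
    ∀ {y t : V} (w : G.Walk y t), t = u → (∀ z ∈ w.support, z ∈ S) → y ∉ C →
      ∃ w' : G.Walk y t, ∀ z ∈ w'.support, z ∈ S \ C := by
  intro y t w
  induction w with
  | nil =>
    intro ht _ _
    subst ht
    exact ⟨.nil, by simp [huS, huC]⟩
  | @cons a b t hab wb ih =>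
    intro ht hsup haC
    have haS : a ∈ S := hsup a (by simp [SimpleGraph.Walk.support_cons])
    by_cases hbC : b ∈ C
    · have hau : a = u := by
        by_contra hau
        exact haC (hclose a b hab hbC haS hau)
      subst ht; subst hau
      exact ⟨.nil, by simp [huS, huC]⟩
    · obtain ⟨w', hw'⟩ := ih ht
        (fun z hz => hsup z (by simp [SimpleGraph.Walk.support_cons, hz])) hbC
      refine ⟨.cons hab w', fun z hz => ?_⟩
      rw [SimpleGraph.Walk.support_cons, List.mem_cons] at hz
      rcases hz with rfl | hz
      · exact Finset.mem_sdiff.2 ⟨haS, haC⟩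
      · exact hw' z hz

open List in
private lemma key_enum {V : Type*} [DecidableEq V] (G : SimpleGraph V) :
    ∀ n (S : Finset V) (u : V), S.card ≤ n → u ∈ S →
    (∀ x ∈ S, ∃ w : G.Walk u x, ∀ z ∈ w.support, z ∈ S) →
    ∃ l : List V, l.head? = some u ∧ l.Nodup ∧ l.toFinset = S ∧
      l.Chain' (fun a b => G.dist a b ≤ 3) ∧
      ∃ z, l.getLast? = some z ∧ (z = u ∨ G.Adj u z) := by
  intro n
  induction n with
  | zero =>
    intro S u hcard hu _
    exact absurd (Finset.card_pos.2 ⟨u, hu⟩) (by omega)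
  | succ n ih =>
    intro S u hcard hu hconn
    by_cases hS : S = {u}
    · refine ⟨[u], rfl, by simp, by simp [hS], List.isChain_singleton _, u, rfl, Or.inl rfl⟩
    · -- there is a vertex other than u
      have hex : ∃ x ∈ S, x ≠ u := by
        by_contra hcon
        push_neg at hcon
        exact hS (Finset.eq_singleton_iff_unique_mem.2 ⟨hu, hcon⟩)
      obtain ⟨x, hxS, hxu⟩ := hex
      obtain ⟨w, hw⟩ := hconn x hxS
      -- extract a neighbor c of u inside S
      obtain ⟨c, hadj, hcS⟩ : ∃ c, G.Adj u c ∧ c ∈ S := by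
        cases w with
        | nil => exact absurd rfl hxu
        | cons h w' =>
          exact ⟨_, h, hw _ (by simp [SimpleGraph.Walk.support_cons])⟩
      have hcu : c ≠ u := fun e => G.loopless.irrefl u (e ▸ hadj)
      set S' : Finset V := S.erase u with hS'def
      have hcS' : c ∈ S' := Finset.mem_erase.2 ⟨hcu, hcS⟩
      letI : DecidablePred (fun x => ∃ w : G.Walk c x, ∀ z ∈ w.support, z ∈ S') :=
        Classical.decPred _
      set C : Finset V :=
        S'.filter (fun x => ∃ w : G.Walk c x, ∀ z ∈ w.support, z ∈ S') with hCdef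
      have hcC : c ∈ C :=
        Finset.mem_filter.2 ⟨hcS', SimpleGraph.Walk.nil, by simpa using hcS'⟩
      have hCS' : C ⊆ S' := Finset.filter_subset _ _
      have hCS : C ⊆ S := hCS'.trans (Finset.erase_subset _ _)
      have huC : u ∉ C := fun h => (Finset.mem_erase.1 (hCS' h)).1 rfl
      have hCconn : ∀ y ∈ C, ∃ w : G.Walk c y, ∀ z ∈ w.support, z ∈ C := by
        intro y hy
        obtain ⟨_, wy, hwy⟩ := Finset.mem_filter.1 hy
        refine ⟨wy, fun z hz => Finset.mem_filter.2 ⟨hwy z hz, wy.takeUntil z hz,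
          fun a ha => hwy _ (wy.support_takeUntil_subset hz ha)⟩⟩
      have hS'card : S'.card ≤ n := by
        rw [hS'def, Finset.card_erase_of_mem hu]
        omega
      have hCcard : C.card ≤ n := le_trans (Finset.card_le_card hCS') hS'card
      obtain ⟨lc, hlch, hlcn, hlct, hlcc, c', hlcl, hc'⟩ := ih C c hCcard hcC hCconn
      have hlcne : lc ≠ [] := by
        intro h; rw [h] at hlch; exact absurd hlch (by simp)
      have hulc : u ∉ lc := fun h => huC (hlct ▸ List.mem_toFinset.2 h)
      -- reversed chain on lc
      have hlcrev : lc.reverse.Chain' (fun a b => G.dist a b ≤ 3) :=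
        List.isChain_reverse.2 (hlcc.imp (fun a b h => by
          simpa [flip, SimpleGraph.dist_comm] using h))
      -- distance estimates
      have hjun : ∀ a b : V, (a = u ∨ G.Adj u a) → (b = c ∨ G.Adj c b) →
          G.dist a b ≤ 3 := by
        rintro a b (rfl | ha) (rfl | hb)
        · exact le_trans (SimpleGraph.dist_le (SimpleGraph.Walk.cons hadj .nil)) (by simp)
        · exact le_trans (SimpleGraph.dist_le
            (SimpleGraph.Walk.cons hadj (SimpleGraph.Walk.cons hb .nil))) (by simp)
        · exact le_trans (SimpleGraph.dist_le
            (SimpleGraph.Walk.cons ha.symm (SimpleGraph.Walk.cons hadj .nil))) (by simp)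
        · exact le_trans (SimpleGraph.dist_le
            (SimpleGraph.Walk.cons ha.symm (SimpleGraph.Walk.cons hadj
              (SimpleGraph.Walk.cons hb .nil)))) (by simp)
      have hheadrev : lc.reverse.head? = some c' := by
        rw [List.head?_reverse]; exact hlcl
      have hlastrev : lc.reverse.getLast? = some c := by
        rw [List.getLast?_reverse]; exact hlch
      by_cases hCS'eq : C = S'
      · -- whole rest is one component
        refine ⟨u :: lc.reverse, rfl, ?_, ?_, ?_, c, ?_, Or.inr hadj⟩
        · exact List.nodup_cons.2 ⟨by simpa using hulc, (List.nodup_reverse.2 hlcn)⟩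
        · rw [List.toFinset_cons, List.toFinset_reverse, hlct, hCS'eq, hS'def,
            Finset.insert_erase hu]
        · refine List.isChain_cons.2 ⟨?_, hlcrev⟩
          intro y hy
          rw [hheadrev] at hy
          cases hy
          exact hjun u c' (Or.inl rfl) hc'
        · rw [show u :: lc.reverse = [u] ++ lc.reverse from rfl,
            List.getLast?_append_of_ne_nil _ (by simpa using hlcne)]
          exact hlastrev
      · -- split off the component C and recurse on the rest
        set S'' : Finset V := S \ C with hS''def
        have huS'' : u ∈ S'' := Finset.mem_sdiff.2 ⟨hu, huC⟩
        have hclose : ∀ a b, G.Adj a b → b ∈ C → a ∈ S → a ≠ u → a ∈ C := by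
          intro a b hab hbC haS hau
          obtain ⟨_, wc, hwc⟩ := Finset.mem_filter.1 hbC
          refine Finset.mem_filter.2 ⟨Finset.mem_erase.2 ⟨hau, haS⟩,
            wc.concat hab.symm, ?_⟩
          intro z hz
          rw [SimpleGraph.Walk.support_concat] at hz
          rcases List.mem_append.1 hz with hz | hz
          · exact hwc z hz
          · simp only [List.mem_singleton] at hz
            subst hz
            exact Finset.mem_erase.2 ⟨hau, haS⟩
        have hS''conn : ∀ y ∈ S'', ∃ w : G.Walk u y, ∀ z ∈ w.support, z ∈ S'' := by
          intro y hy
          obtain ⟨hyS, hyC⟩ := Finset.mem_sdiff.1 hy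
          obtain ⟨w, hw⟩ := hconn y hyS
          obtain ⟨w', hw'⟩ := walk_avoid G S C u hu huC hclose w.reverse rfl
            (fun z hz => hw z (by rwa [SimpleGraph.Walk.support_reverse,
              List.mem_reverse] at hz)) hyC
          exact ⟨w'.reverse, fun z hz => hw' z (by
            rwa [SimpleGraph.Walk.support_reverse, List.mem_reverse] at hz)⟩
        have hS''card : S''.card ≤ n := by
          have h1 : S''.card = S.card - C.card := Finset.card_sdiff_of_subset hCS
          have h2 : 1 ≤ C.card := Finset.card_pos.2 ⟨c, hcC⟩
          omega
        obtain ⟨l'', hl''h, hl''n, hl''t, hl''c, u'', hl''l, hu''⟩ :=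
          ih S'' u hS''card huS'' hS''conn
        have hl''ne : l'' ≠ [] := by
          intro h; rw [h] at hl''h; exact absurd hl''h (by simp)
        refine ⟨l'' ++ lc.reverse, ?_, ?_, ?_, ?_, c, ?_, Or.inr hadj⟩
        · cases l'' with
          | nil => exact absurd rfl hl''ne
          | cons a t => simpa using hl''h
        · refine hl''n.append (List.nodup_reverse.2 hlcn) ?_
          intro z hz hz'
          have hz1 : z ∈ S'' := hl''t ▸ List.mem_toFinset.2 hz
          have hz2 : z ∈ C := hlct ▸ List.mem_toFinset.2 (List.mem_reverse.1 hz')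
          exact (Finset.mem_sdiff.1 hz1).2 hz2
        · rw [List.toFinset_append, List.toFinset_reverse, hl''t, hlct, hS''def,
            Finset.sdiff_union_of_subset hCS]
        · refine hl''c.append hlcrev ?_
          intro a ha b hb
          rw [hl''l] at ha
          rw [hheadrev] at hb
          cases ha; cases hb
          exact hjun u'' c' hu'' hc'
        · rw [List.getLast?_append_of_ne_nil _ (by simpa using hlcne)]
          exact hlastrev

/-- If `G` is a finite connected graph with `n` vertices, there is an enumeration
`v_1, …, v_n` of the vertices such that consecutive vertices are at distance at
most 3. -/
theorem exists_enumeration_dist_le_three {V : Type*} [Fintype V]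
    (G : SimpleGraph V) (hG : G.Connected) :
    ∃ e : Fin (Fintype.card V) ≃ V,
      ∀ (i : ℕ) (h : i + 1 < Fintype.card V),
        G.dist (e ⟨i, Nat.lt_of_succ_lt h⟩) (e ⟨i + 1, h⟩) ≤ 3 := by
  classical
  have hne : Nonempty V := hG.nonempty
  obtain ⟨u⟩ := hne
  obtain ⟨l, hlh, hln, hlt, hlc, _⟩ := key_enum G (Fintype.card V) Finset.univ u
    (by simp) (Finset.mem_univ u)
    (fun x _ => ⟨(hG.preconnected u x).some, fun z _ => Finset.mem_univ z⟩)
  have hmem : ∀ x : V, x ∈ l := fun x => by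
    rw [← List.mem_toFinset, hlt]; exact Finset.mem_univ x
  have hlen : l.length = Fintype.card V := by
    rw [← List.toFinset_card_of_nodup hln, hlt, Finset.card_univ]
  refine ⟨(finCongr hlen.symm).trans (hln.getEquivOfForallMemList l hmem), ?_⟩
  intro i h
  have h1 : i < l.length - 1 := by omega
  have := List.isChain_iff_getElem.1 hlc i (by omega)
  simpa [List.Nodup.getEquivOfForallMemList, finCongr] using this
end

section
/- If T is a tree, then the cube of T contains a Hamiltonian path. -/
open SimpleGraph

section Aux

variable {V : Type*} [Fintype V] [DecidableEq V] (T : SimpleGraph V)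

open Classical in
/-- DFS from `r` with unvisited set `s`, returning a traversal list and the
set of vertices left unvisited.  The list starts at `r` and ends at a
vertex adjacent (or equal) to `r`, with consecutive vertices at distance ≤ 3. -/
noncomputable def dfsGo : ℕ → V → Finset V → List V × Finset V
  | 0, r, s => ([r], s)
  | (n+1), r, s =>
    if h : ∃ c ∈ s, T.Adj r c then
      let c := h.choose
      let p := dfsGo n c (s.erase c)
      let q := dfsGo n r p.2
      (q.1 ++ p.1.reverse, q.2)
    else ([r], s)

/-- Specification of `dfsGo`. -/
structure DSpec (r : V) (s : Finset V) (L : List V) (s' : Finset V) : Prop where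
  sub : s' ⊆ s
  ne : L ≠ []
  head : L.head? = some r
  last : ∀ h : L ≠ [], T.Adj r (L.getLast h) ∨ L.getLast h = r
  tofin : L.toFinset = insert r (s \ s')
  nodup : L.Nodup
  chain : L.Chain' (fun a b => T.dist a b ≤ 3)
  sep : ∀ x ∈ s', ∀ y ∈ insert r (s \ s'), ¬ T.Adj x y

lemma adj_dist_le_one {u v : V} (h : T.Adj u v) : T.dist u v ≤ 1 := by
  have := SimpleGraph.dist_le (SimpleGraph.Walk.cons h SimpleGraph.Walk.nil)
  simpa using this

lemma dfsGo_spec (hconn : T.Connected) :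
    ∀ n (r : V) (s : Finset V), r ∉ s → s.card ≤ n →
      DSpec T r s (dfsGo T n r s).1 (dfsGo T n r s).2 := by
  intro n
  induction n with
  | zero =>
    intro r s hr hcard
    have hs : s = ∅ := Finset.card_eq_zero.mp (Nat.le_zero.mp hcard)
    subst hs
    refine ⟨Finset.Subset.refl _, by simp [dfsGo], by simp [dfsGo], ?_, by simp [dfsGo], by simp [dfsGo], by simp only [dfsGo]; exact List.isChain_singleton _, by simp [dfsGo]⟩
    intro h
    right; simp [dfsGo]
  | succ n ih =>
    intro r s hr hcard
    by_cases h : ∃ c ∈ s, T.Adj r c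
    · -- unfold
      have hdef : dfsGo T (n+1) r s =
          (( (dfsGo T n r (dfsGo T n h.choose (s.erase h.choose)).2).1
              ++ (dfsGo T n h.choose (s.erase h.choose)).1.reverse),
            (dfsGo T n r (dfsGo T n h.choose (s.erase h.choose)).2).2) := by
        simp only [dfsGo, dif_pos h]
      set c := h.choose with hc
      obtain ⟨hcs, hadj⟩ := h.choose_spec
      have hcr : c ≠ r := fun e => hr (e ▸ hcs)
      have hscard : (s.erase c).card ≤ n := by
        rw [Finset.card_erase_of_mem hcs]
        have : 1 ≤ s.card := Finset.card_pos.mpr ⟨c, hcs⟩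
        omega
      have hcerase : c ∉ s.erase c := Finset.notMem_erase _ _
      have P1 := ih c (s.erase c) hcerase hscard
      set p := dfsGo T n c (s.erase c) with hp
      have hp2sub : p.2 ⊆ s.erase c := P1.sub
      have hrp2 : r ∉ p.2 := fun hx => hr (Finset.mem_of_mem_erase (hp2sub hx))
      have hp2card : p.2.card ≤ n := le_trans (Finset.card_le_card hp2sub) hscard
      have P2 := ih r p.2 hrp2 hp2card
      set q := dfsGo T n r p.2 with hq
      rw [hdef]
      -- basic facts
      have hcns1 : c ∉ p.2 := fun hx => hcerase (hp2sub hx)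
      have hs1s : p.2 ⊆ s := fun x hx => Finset.mem_of_mem_erase (hp2sub hx)
      have hs2s1 : q.2 ⊆ p.2 := P2.sub
      have hcnq2 : c ∉ q.2 := fun hx => hcns1 (hs2s1 hx)
      -- set identity
      have hsets : insert r (p.2 \ q.2) ∪ insert c ((s.erase c) \ p.2) = insert r (s \ q.2) := by
        ext x
        simp only [Finset.mem_union, Finset.mem_insert, Finset.mem_sdiff, Finset.mem_erase]
        constructor
        · rintro ((rfl | ⟨h1, h2⟩) | (rfl | ⟨⟨hne, h1⟩, h2⟩))
          · exact Or.inl rfl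
          · exact Or.inr ⟨hs1s h1, h2⟩
          · exact Or.inr ⟨hcs, hcnq2⟩
          · exact Or.inr ⟨h1, fun hx => h2 (hs2s1 hx)⟩
        · rintro (rfl | ⟨hxs, hxq⟩)
          · exact Or.inl (Or.inl rfl)
          · by_cases hxc : x = c
            · exact Or.inr (Or.inl hxc)
            · by_cases hx1 : x ∈ p.2
              · exact Or.inl (Or.inr ⟨hx1, hxq⟩)
              · exact Or.inr (Or.inr ⟨⟨hxc, hxs⟩, hx1⟩)
      have htofin : (q.1 ++ p.1.reverse).toFinset = insert r (s \ q.2) := by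
        rw [List.toFinset_append, List.toFinset_reverse, P1.tofin, P2.tofin, hsets]
      -- disjointness of the two lists
      have hdisj : q.1.Disjoint p.1.reverse := by
        intro a haq hap
        have haq' : a ∈ q.1.toFinset := List.mem_toFinset.mpr haq
        have hap' : a ∈ p.1.toFinset := List.mem_toFinset.mpr (List.mem_reverse.mp hap)
        rw [P2.tofin] at haq'
        rw [P1.tofin] at hap'
        simp only [Finset.mem_insert, Finset.mem_sdiff, Finset.mem_erase] at haq' hap'
        rcases haq' with h0 | ⟨h1, h2⟩
        · rcases hap' with h0' | ⟨⟨hne, h3⟩, _⟩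
          · exact hcr (h0'.symm.trans h0)
          · exact hr (h0 ▸ h3)
        · rcases hap' with h0' | ⟨_, h4⟩
          · exact hcns1 (h0' ▸ h1)
          · exact h4 h1
      -- heads and lasts
      have hq1ne : q.1 ≠ [] := P2.ne
      have hp1ne : p.1 ≠ [] := P1.ne
      have hp1rne : p.1.reverse ≠ [] := by simpa using hp1ne
      have happne : q.1 ++ p.1.reverse ≠ [] := by
        intro hcon; exact hq1ne (List.append_eq_nil_iff.mp hcon).1
      have hlastrev : ∀ h : p.1.reverse ≠ [], p.1.reverse.getLast h = c := by
        intro hh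
        rw [List.getLast_reverse]
        have hh2 : p.1.head? = some c := P1.head
        exact (List.head_eq_iff_head?_eq_some _).mpr hh2
      have hvlast := P2.last hq1ne
      have hdlast := P1.last hp1ne
      -- distances
      have hdistvr : T.dist (q.1.getLast hq1ne) r ≤ 1 := by
        rcases hvlast with hv | hv
        · rw [SimpleGraph.dist_comm]; exact adj_dist_le_one T hv
        · rw [hv, SimpleGraph.dist_self]; omega
      have hdistrc : T.dist r c ≤ 1 := adj_dist_le_one T hadj
      have hdistcd : T.dist c (p.1.getLast hp1ne) ≤ 1 := by
        rcases hdlast with hd | hd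
        · exact adj_dist_le_one T hd
        · rw [hd, SimpleGraph.dist_self]; omega
      have hglue : T.dist (q.1.getLast hq1ne) (p.1.getLast hp1ne) ≤ 3 := by
        calc T.dist (q.1.getLast hq1ne) (p.1.getLast hp1ne)
            ≤ T.dist (q.1.getLast hq1ne) r + T.dist r (p.1.getLast hp1ne) :=
              hconn.dist_triangle
          _ ≤ T.dist (q.1.getLast hq1ne) r + (T.dist r c + T.dist c (p.1.getLast hp1ne)) := by
              exact Nat.add_le_add_left hconn.dist_triangle _
          _ ≤ 1 + (1 + 1) := by
              exact Nat.add_le_add hdistvr (Nat.add_le_add hdistrc hdistcd)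
          _ = 3 := rfl
      refine ⟨fun x hx => hs1s (hs2s1 hx), happne, ?_, ?_, htofin, ?_, ?_, ?_⟩
      · rw [List.head?_append, P2.head]; rfl
      · intro hne'
        rw [List.getLast_append]
        have : p.1.reverse.isEmpty = false := by
          simpa [List.isEmpty_iff] using hp1rne
        rw [dif_neg (by simp [this])]
        rw [hlastrev]
        exact Or.inl hadj
      · rw [List.nodup_append]
        exact ⟨P2.nodup, by simpa using P1.nodup, fun a ha b hb hab => hdisj ha (hab ▸ hb)⟩
      · simp only [List.Chain']
        rw [List.isChain_append]
        refine ⟨P2.chain, ?_, ?_⟩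
        · rw [List.isChain_reverse]
          exact P1.chain.imp (fun a b hab => by
            simpa [flip, SimpleGraph.dist_comm] using hab)
        · intro x hxmem y hymem
          rw [List.getLast?_eq_getLast (l := q.1) hq1ne] at hxmem
          have hyrev : p.1.reverse.head? = p.1.getLast? := List.head?_reverse
          rw [hyrev, List.getLast?_eq_getLast (l := p.1) hp1ne] at hymem
          simp only [Option.mem_def, Option.some.injEq] at hxmem hymem
          rw [← hxmem, ← hymem] at *
          exact hglue
      · intro x hx y hy hadjxy
        rw [← hsets] at hy
        rcases Finset.mem_union.mp hy with hy1 | hy2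
        · exact P2.sep x hx y hy1 hadjxy
        · exact P1.sep x (hs2s1 hx) y hy2 hadjxy
    · have hdef : dfsGo T (n+1) r s = ([r], s) := by
        simp only [dfsGo, dif_neg h]
      rw [hdef]
      refine ⟨Finset.Subset.refl _, by simp, by simp, ?_, by simp, by simp, List.isChain_singleton _, ?_⟩
      · intro _; right; simp
      · intro x hx y hy hadj
        simp only [Finset.sdiff_self, Finset.mem_insert, Finset.notMem_empty, or_false] at hy
        subst hy
        exact h ⟨x, hx, hadj.symm⟩

lemma exists_crossing {s' : Finset V} :
    ∀ {x r : V} (_ : T.Walk x r), x ∈ s' → r ∉ s' →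
      ∃ a b, a ∈ s' ∧ b ∉ s' ∧ T.Adj a b := by
  intro x r w
  induction w with
  | nil => intro h1 h2; exact absurd h1 h2
  | @cons u m _ h _ ih =>
    intro h1 h2
    by_cases hb : m ∈ s'
    · exact ih hb h2
    · exact ⟨u, m, h1, hb, h⟩

lemma exists_walk_of_chain_s2 (G : SimpleGraph V) :
    ∀ (l : List V), l ≠ [] → List.Chain' G.Adj l →
      ∃ (u v : V) (w : G.Walk u v), w.support = l := by
  intro l
  induction l with
  | nil => simp
  | cons a t ih =>
    intro _ hc
    cases t with
    | nil => exact ⟨a, a, SimpleGraph.Walk.nil, rfl⟩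
    | cons b t' =>
      obtain ⟨u, v, w, hw⟩ := ih (by simp) hc.tail
      have hu : u = b := by
        have h1 : w.support.head? = some u := by
          rw [w.support_eq_cons]; rfl
        rw [hw] at h1
        simpa using h1.symm
      subst hu
      have hadj : G.Adj a u := (List.isChain_cons_cons.mp hc).1
      exact ⟨a, v, SimpleGraph.Walk.cons hadj w,
        by rw [SimpleGraph.Walk.support_cons, hw]⟩

lemma chain'_and {α : Type*} {R S : α → α → Prop} :
    ∀ {l : List α}, l.Chain' R → l.Chain' S → l.Chain' (fun a b => R a b ∧ S a b) := by
  intro l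
  induction l with
  | nil => intro _ _; exact List.isChain_nil
  | cons a t ih =>
    cases t with
    | nil => intro _ _; exact List.isChain_singleton _
    | cons b t' =>
      intro h1 h2
      simp only [List.Chain'] at h1 h2 ⊢
      rw [List.isChain_cons_cons] at h1 h2 ⊢
      exact ⟨⟨h1.1, h2.1⟩, ih h1.2 h2.2⟩

end Aux

/-- If `T` is a (nonempty finite) tree, then its cube contains a Hamiltonian path. -/
theorem cube_of_tree_hamiltonian_path {V : Type*} [Fintype V] [DecidableEq V] [Nonempty V]
    (T : SimpleGraph V) (hT : T.IsTree) :
    ∃ (u v : V) (p : T.cube.Walk u v), p.IsHamiltonian := by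
  have hconn : T.Connected := hT.isConnected
  obtain ⟨r⟩ := ‹Nonempty V›
  set s : Finset V := Finset.univ.erase r with hs
  have hr : r ∉ s := Finset.notMem_erase _ _
  have spec := dfsGo_spec T hconn s.card r s hr le_rfl
  set L := (dfsGo T s.card r s).1 with hL
  set s' := (dfsGo T s.card r s).2 with hs'
  -- everything is visited
  have hs'empty : s' = ∅ := by
    by_contra hne
    obtain ⟨x, hx⟩ := Finset.nonempty_iff_ne_empty.mpr hne
    obtain ⟨w⟩ := hconn.preconnected x r
    have hrns' : r ∉ s' := fun hcon => hr (spec.sub hcon)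
    obtain ⟨a, b, ha, hb, hadj⟩ := exists_crossing T w hx hrns'
    have hbmem : b ∈ insert r (s \ s') := by
      by_cases hbr : b = r
      · exact Finset.mem_insert.mpr (Or.inl hbr)
      · refine Finset.mem_insert.mpr (Or.inr (Finset.mem_sdiff.mpr ⟨?_, hb⟩))
        exact Finset.mem_erase.mpr ⟨hbr, Finset.mem_univ b⟩
    exact spec.sep a ha b hbmem hadj
  have htofin : L.toFinset = Finset.univ := by
    rw [spec.tofin, hs'empty, Finset.sdiff_empty, hs, Finset.insert_erase (Finset.mem_univ r)]
  -- the chain in the cube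
  have hchain : L.Chain' T.cube.Adj := by
    have h1 : L.Chain' (fun a b => a ≠ b) := spec.nodup.isChain
    have h2 := chain'_and h1 spec.chain
    exact h2.imp (fun a b hab => (SimpleGraph.fromRel_adj _ a b).mpr ⟨hab.1, Or.inl hab.2⟩)
  obtain ⟨u, v, w, hw⟩ := exists_walk_of_chain_s2 T.cube L spec.ne hchain
  refine ⟨u, v, w, ?_⟩
  intro a
  rw [hw]
  refine List.count_eq_one_of_mem spec.nodup ?_
  rw [← List.mem_toFinset, htofin]
  exact Finset.mem_univ a
end

section
/- Let G be a connected graph and v a vertex lying on at least one cycle. If g_v denotes the length of a shortest cycle through v, then there exists a vertex u on such a cycle such that in the wave started at u, vertex v receives the wave signal either from two distinct neighbors at the same time d (and then g_v ≤ 2d) or from two distinct neighbors at times d and d+1 (and then g_v ≤ 2d+1); conversely such double receptions certify cycles through v of the stated lengths. -/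
open SimpleGraph Walk

private lemma end_mem_support_tail {V : Type*} {G : SimpleGraph V} {a b : V}
    (W : G.Walk a b) (h : ¬ W.Nil) : b ∈ W.support.tail := by
  cases W with
  | nil => simp at h
  | cons h' T => simp [T.end_mem_support]

private lemma length_eq_one_of_edge_ends {V : Type*} {G : SimpleGraph V} {x y : V}
    {S : G.Walk x y} (hS : S.IsPath) (he : s(x, y) ∈ S.edges) : S.length = 1 := by
  cases S with
  | nil => simp at he
  | @cons _ t _ h T =>
    rw [Walk.edges_cons, List.mem_cons] at he
    rw [Walk.cons_isPath_iff] at hS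
    rcases he with he | he
    · have hyt : y = t := Sym2.congr_right.mp he
      subst hyt
      have hTnil : T.Nil := by
        by_contra hn
        have h1 : y ∈ T.support.tail := end_mem_support_tail T hn
        have h2 := hS.1.support_nodup
        rw [T.support_eq_cons] at h2
        exact (List.nodup_cons.mp h2).1 h1
      rw [Walk.length_cons, Walk.nil_iff_length_eq.mp hTnil]
    · exact absurd (Walk.fst_mem_support_of_mem_edges T he) hS.2

private lemma support_tail_append {V : Type*} {G : SimpleGraph V} {a b c : V}
    (W₁ : G.Walk a b) (W₂ : G.Walk b c) :
    (W₁.append W₂).support.tail = W₁.support.tail ++ W₂.support.tail := by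
  rw [Walk.support_append, W₁.support_eq_cons]
  rfl

private lemma exists_split {V : Type*} {G : SimpleGraph V} :
    ∀ {a b : V} (p : G.Walk a b) (k : ℕ), k ≤ p.length →
      ∃ (x : V) (A : G.Walk a x) (B : G.Walk x b), A.append B = p ∧ A.length = k := by
  intro a b p k
  induction k generalizing a b p with
  | zero => exact fun _ => ⟨a, Walk.nil, p, by simp, rfl⟩
  | succ k ih =>
    intro hk
    cases p with
    | nil => simp at hk
    | cons h r =>
      obtain ⟨x, A, B, hAB, hA⟩ := ih r (by simpa using hk)
      exact ⟨x, Walk.cons h A, B, by simp [hAB], by simp [hA]⟩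

private lemma isCycle_of_tail_nodup {V : Type*} {G : SimpleGraph V} {v : V}
    (q : G.Walk v v) (h3 : 3 ≤ q.length) (hnd : q.support.tail.Nodup) : q.IsCycle := by
  cases q with
  | nil => simp at h3
  | @cons _ b _ h R =>
    have hR : R.IsPath := by
      rw [Walk.isPath_def]
      simpa using hnd
    rw [Walk.cons_isCycle_iff]
    refine ⟨hR, fun he => ?_⟩
    have : R.length = 1 := length_eq_one_of_edge_ends hR (by rwa [Sym2.eq_swap] at he)
    rw [Walk.length_cons, this] at h3
    omega

private lemma iso_min_le {V : Type*} [DecidableEq V] {G : SimpleGraph V} {v : V}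
    (p : G.Walk v v) (hp : p.IsCycle)
    (hmin : ∀ q : G.Walk v v, q.IsCycle → p.length ≤ q.length) :
    ∀ (s : ℕ) {x y : V} (A : G.Walk v x) (M : G.Walk x y) (B : G.Walk y v),
      A.append (M.append B) = p → ∀ S : G.Walk x y, S.IsPath → S.length = s →
      min M.length (A.length + B.length) ≤ s := by
  intro s
  induction s using Nat.strong_induction_on with
  | _ s IH =>
  intro x y A M B hdec S hS hSlen
  by_contra hcon
  rw [not_le, lt_min_iff] at hcon
  obtain ⟨hsM, hsAB⟩ := hcon
  have hptail : p.support.tail = A.support.tail ++ (M.support.tail ++ B.support.tail) := by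
    rw [← hdec, support_tail_append, support_tail_append]
  have hnd : (A.support.tail ++ (M.support.tail ++ B.support.tail)).Nodup := by
    rw [← hptail]; exact hp.2
  rw [List.nodup_append] at hnd
  obtain ⟨hAt, hMB, hdisj⟩ := hnd
  rw [List.nodup_append] at hMB
  obtain ⟨hMt, hBt, hMBd⟩ := hMB
  have hMnil : ¬ M.Nil := by rw [Walk.not_nil_iff_lt_length]; omega
  have hyM : y ∈ M.support.tail := end_mem_support_tail M hMnil
  have hxy : x ≠ y := by
    intro hxyeq
    by_cases hA : A.Nil
    · have hvx : v = x := Walk.eq_of_length_eq_zero (Walk.nil_iff_length_eq.mp hA)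
      by_cases hB : B.Nil
      · have h1 : B.length = 0 := Walk.nil_iff_length_eq.mp hB
        have h2 : A.length = 0 := Walk.nil_iff_length_eq.mp hA
        omega
      · have hvB : v ∈ B.support.tail := end_mem_support_tail B hB
        have hyv : y = v := hxyeq.symm.trans hvx.symm
        exact hMBd y hyM y (hyv ▸ hvB) rfl
    · have hxA : x ∈ A.support.tail := end_mem_support_tail A hA
      exact hdisj x hxA x (List.mem_append_left _ (hxyeq ▸ hyM)) rfl
  by_cases hzex : ∃ z, z ∈ S.support ∧ z ≠ x ∧ z ≠ y ∧ z ∈ p.support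
  · obtain ⟨z, hzS, hzx, hzy, hzp⟩ := hzex
    have hspec := S.take_spec hzS
    have hlsum : (S.takeUntil z hzS).length + (S.dropUntil z hzS).length = s := by
      have := congrArg Walk.length hspec
      rwa [Walk.length_append, hSlen] at this
    have hS₁ : (S.takeUntil z hzS).IsPath := hS.takeUntil _
    have hS₂ : (S.dropUntil z hzS).IsPath := hS.dropUntil _
    have hl₁ : 1 ≤ (S.takeUntil z hzS).length := by
      rcases Nat.eq_zero_or_pos (S.takeUntil z hzS).length with h0 | h1
      · exact absurd (Walk.eq_of_length_eq_zero h0) hzx.symm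
      · exact h1
    have hl₂ : 1 ≤ (S.dropUntil z hzS).length := by
      rcases Nat.eq_zero_or_pos (S.dropUntil z hzS).length with h0 | h1
      · exact absurd (Walk.eq_of_length_eq_zero h0) hzy
      · exact h1
    rw [← hdec, Walk.mem_support_append_iff, Walk.mem_support_append_iff] at hzp
    rcases hzp with hzA | hzM | hzB
    · have hAspec := A.take_spec hzA
      have hAlen : (A.takeUntil z hzA).length + (A.dropUntil z hzA).length = A.length := by
        have := congrArg Walk.length hAspec
        rwa [Walk.length_append] at this
      rw [← hAspec] at hdec
      have e1 := IH (S.takeUntil z hzS).length (by omega)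
        (A.takeUntil z hzA) (A.dropUntil z hzA) (M.append B)
        (by rw [← hdec]; simp only [Walk.append_assoc])
        (S.takeUntil z hzS).reverse hS₁.reverse (by simp)
      have e2 := IH (S.dropUntil z hzS).length (by omega)
        (A.takeUntil z hzA) ((A.dropUntil z hzA).append M) B
        (by rw [← hdec]; simp only [Walk.append_assoc])
        (S.dropUntil z hzS) hS₂ rfl
      rw [Walk.length_append] at e1 e2
      omega
    · have hMspec := M.take_spec hzM
      have hMlen : (M.takeUntil z hzM).length + (M.dropUntil z hzM).length = M.length := by
        have := congrArg Walk.length hMspec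
        rwa [Walk.length_append] at this
      rw [← hMspec] at hdec
      have e1 := IH (S.takeUntil z hzS).length (by omega)
        A (M.takeUntil z hzM) ((M.dropUntil z hzM).append B)
        (by rw [← hdec]; simp only [Walk.append_assoc])
        (S.takeUntil z hzS) hS₁ rfl
      have e2 := IH (S.dropUntil z hzS).length (by omega)
        (A.append (M.takeUntil z hzM)) (M.dropUntil z hzM) B
        (by rw [← hdec]; simp only [Walk.append_assoc])
        (S.dropUntil z hzS) hS₂ rfl
      rw [Walk.length_append] at e1 e2
      omega
    · have hBspec := B.take_spec hzB
      have hBlen : (B.takeUntil z hzB).length + (B.dropUntil z hzB).length = B.length := by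
        have := congrArg Walk.length hBspec
        rwa [Walk.length_append] at this
      rw [← hBspec] at hdec
      have e1 := IH (S.takeUntil z hzS).length (by omega)
        A (M.append (B.takeUntil z hzB)) (B.dropUntil z hzB)
        (by rw [← hdec]; simp only [Walk.append_assoc])
        (S.takeUntil z hzS) hS₁ rfl
      have e2 := IH (S.dropUntil z hzS).length (by omega)
        (A.append M) (B.takeUntil z hzB) (B.dropUntil z hzB)
        (by rw [← hdec]; simp only [Walk.append_assoc])
        (S.dropUntil z hzS).reverse hS₂.reverse (by simp)
      rw [Walk.length_append] at e1 e2
      omega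
  · push_neg at hzex
    have hs1 : 1 ≤ s := by
      rcases Nat.eq_zero_or_pos s with h0 | h1
      · exact absurd (Walk.eq_of_length_eq_zero (hSlen.trans h0)) hxy
      · exact h1
    set q : G.Walk v v := A.append (S.append B) with hq
    have hqlen : q.length = A.length + (s + B.length) := by
      rw [hq, Walk.length_append, Walk.length_append, hSlen]
    have hq3 : 3 ≤ q.length := by omega
    have hqtail : q.support.tail = A.support.tail ++ (S.support.tail ++ B.support.tail) := by
      rw [hq, support_tail_append, support_tail_append]
    have hSt : S.support.tail.Nodup := by
      have := hS.support_nodup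
      rw [S.support_eq_cons] at this
      exact (List.nodup_cons.mp this).2
    have hxSt : x ∉ S.support.tail := by
      have := hS.support_nodup
      rw [S.support_eq_cons] at this
      exact (List.nodup_cons.mp this).1
    have key : ∀ z ∈ S.support.tail, z ∉ A.support.tail ∧ z ∉ B.support.tail := by
      intro z hzSt
      have hzS : z ∈ S.support := by rw [S.support_eq_cons]; exact List.mem_cons_of_mem _ hzSt
      have hzx : z ≠ x := fun h => hxSt (h ▸ hzSt)
      by_cases hzy : z = y
      · subst hzy
        constructor
        · intro hzA
          exact hdisj z hzA z (List.mem_append_left _ hyM) rfl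
        · intro hzB
          exact hMBd z hyM z hzB rfl
      · have hznp := hzex z hzS hzx hzy
        constructor
        · intro hzA
          exact hznp (by rw [p.support_eq_cons, hptail]
                         exact List.mem_cons_of_mem _ (List.mem_append_left _ hzA))
        · intro hzB
          exact hznp (by rw [p.support_eq_cons, hptail]
                         exact List.mem_cons_of_mem _
                           (List.mem_append_right _ (List.mem_append_right _ hzB)))
    have hqnd : q.support.tail.Nodup := by
      rw [hqtail, List.nodup_append]
      refine ⟨hAt, ?_, ?_⟩
      · rw [List.nodup_append]
        refine ⟨hSt, hBt, fun a haS b haB hab => (key a haS).2 (by rw [hab]; exact haB)⟩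
      · intro a haA b haSB hab
        rcases List.mem_append.mp haSB with haS | haB
        · exact (key b haS).1 (by rw [← hab]; exact haA)
        · exact hdisj a haA b (List.mem_append_right _ haB) hab
    have hqcyc : q.IsCycle := isCycle_of_tail_nodup q hq3 hqnd
    have := hmin q hqcyc
    have hplen : p.length = A.length + (M.length + B.length) := by
      rw [← hdec, Walk.length_append, Walk.length_append]
    omega

private lemma adj_of_length_one {V : Type*} {G : SimpleGraph V} {a b : V}
    (W : G.Walk a b) (h : W.length = 1) : G.Adj a b := by
  cases W with
  | nil => simp at h
  | cons h' r =>
    rw [Walk.length_cons] at h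
    have : r.length = 0 := by omega
    rwa [Walk.eq_of_length_eq_zero this] at h'



/-- Wave-based computation of the shortest cycle length through a vertex `v`.
If `v` lies on a cycle and `g_v = sInf {length of cycles through v}`, then some
vertex `u` on a shortest such cycle is a wave source whose wave reaches `v` via
two distinct neighbours at times `d, d` (certifying `g_v ≤ 2d`) or at times
`d, d+1` (certifying `g_v ≤ 2d+1`); here the wave from `u` reaches `v` via a
neighbour `w` at time `dist(u,w) + 1`.  Conversely, any such double reception
certifies a closed walk through `v` and `u` of length `2d` (resp. `2d+1`). -/
theorem wave_girth_through_vertex {V : Type*} [Fintype V] [DecidableEq V]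
    (G : SimpleGraph V) (hG : G.Connected) (v : V)
    (hcyc : ∃ p : G.Walk v v, p.IsCycle) :
    (∃ (u : V) (p : G.Walk v v), p.IsCycle ∧
        p.length = sInf {n : ℕ | ∃ q : G.Walk v v, q.IsCycle ∧ q.length = n} ∧
        u ∈ p.support ∧
        ∃ (w₁ w₂ : V) (d : ℕ), w₁ ≠ w₂ ∧ G.Adj v w₁ ∧ G.Adj v w₂ ∧
          ((G.dist u w₁ + 1 = d ∧ G.dist u w₂ + 1 = d ∧
              sInf {n : ℕ | ∃ q : G.Walk v v, q.IsCycle ∧ q.length = n} ≤ 2 * d) ∨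
           (G.dist u w₁ + 1 = d ∧ G.dist u w₂ + 1 = d + 1 ∧
              sInf {n : ℕ | ∃ q : G.Walk v v, q.IsCycle ∧ q.length = n} ≤ 2 * d + 1))) ∧
    (∀ (u w₁ w₂ : V) (d : ℕ), w₁ ≠ w₂ → G.Adj v w₁ → G.Adj v w₂ →
        ((G.dist u w₁ + 1 = d ∧ G.dist u w₂ + 1 = d) →
            ∃ p : G.Walk v v, u ∈ p.support ∧ p.length = 2 * d) ∧
        ((G.dist u w₁ + 1 = d ∧ G.dist u w₂ + 1 = d + 1) →
            ∃ p : G.Walk v v, u ∈ p.support ∧ p.length = 2 * d + 1)) := by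
  constructor
  · -- Part 1
    have hne : {n : ℕ | ∃ q : G.Walk v v, q.IsCycle ∧ q.length = n}.Nonempty := by
      obtain ⟨q, hq⟩ := hcyc
      exact ⟨q.length, q, hq, rfl⟩
    obtain ⟨p, hpcyc, hplen⟩ := Nat.sInf_mem hne
    have hmin : ∀ q : G.Walk v v, q.IsCycle → p.length ≤ q.length := by
      intro q hq
      rw [hplen]
      exact Nat.sInf_le ⟨q, hq, rfl⟩
    have key : ∀ {x y : V} (A' : G.Walk v x) (M' : G.Walk x y) (B' : G.Walk y v),
        A'.append (M'.append B') = p →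
        min M'.length (A'.length + B'.length) ≤ G.dist x y := by
      intro x y A' M' B' heq
      obtain ⟨W, hW⟩ := hG.exists_walk_length_eq_dist x y
      calc min M'.length (A'.length + B'.length) ≤ W.bypass.length :=
            iso_min_le p hpcyc hmin _ A' M' B' heq W.bypass W.bypass_isPath rfl
        _ ≤ W.length := W.length_bypass_le
        _ = _ := hW
    have hg3 : 3 ≤ p.length := hpcyc.three_le_length
    set g : ℕ := p.length with hg
    set m : ℕ := g / 2 with hm
    obtain ⟨u, A, B, hAB, hAlen⟩ := exists_split p m (by omega)
    have hBlen : B.length = g - m := by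
      have := congrArg Walk.length hAB
      rw [Walk.length_append] at this
      omega
    obtain ⟨w₁, E₁, A₁, hE₁A₁, hE₁len⟩ := exists_split A 1 (by omega)
    have hA₁len : A₁.length = m - 1 := by
      have := congrArg Walk.length hE₁A₁
      rw [Walk.length_append] at this
      omega
    obtain ⟨w₂, B', E₂, hBE, hB'len⟩ := exists_split B (g - m - 1) (by omega)
    have hE₂len : E₂.length = 1 := by
      have := congrArg Walk.length hBE
      rw [Walk.length_append] at this
      omega
    have hadj₁ : G.Adj v w₁ := adj_of_length_one E₁ hE₁len
    have hadj₂ : G.Adj w₂ v := adj_of_length_one E₂ hE₂len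
    -- the three distance bounds
    have eq1 : E₁.append (A₁.append B) = p := by
      rw [Walk.append_assoc, hE₁A₁, hAB]
    have eq2 : A.append (B'.append E₂) = p := by
      rw [hBE, hAB]
    have eq3 : E₁.append ((A₁.append B').append E₂) = p := by
      rw [← Walk.append_assoc A₁ B' E₂, hBE, Walk.append_assoc, hE₁A₁, hAB]
    have hd1 : G.dist u w₁ = m - 1 := by
      have hlow := key E₁ A₁ B eq1
      have hup : G.dist w₁ u ≤ m - 1 := by
        have := SimpleGraph.dist_le A₁
        omega
      rw [SimpleGraph.dist_comm]
      omega
    have hd2 : G.dist u w₂ = g - m - 1 := by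
      have hlow := key A B' E₂ eq2
      have hup : G.dist u w₂ ≤ g - m - 1 := by
        have := SimpleGraph.dist_le B'
        omega
      omega
    have hne12 : w₁ ≠ w₂ := by
      have hlow := key E₁ (A₁.append B') E₂ eq3
      rw [Walk.length_append] at hlow
      intro hweq
      subst hweq
      rw [SimpleGraph.dist_self] at hlow
      omega
    have husup : u ∈ p.support := by
      rw [← hAB, Walk.mem_support_append_iff]
      exact Or.inl A.end_mem_support
    refine ⟨u, p, hpcyc, hplen, husup, w₁, w₂, m, hne12, hadj₁, hadj₂.symm, ?_⟩
    have hsinf : sInf {n : ℕ | ∃ q : G.Walk v v, q.IsCycle ∧ q.length = n} = g := hplen.symm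
    rw [hsinf]
    by_cases hpar : g % 2 = 0
    · left
      refine ⟨by omega, by omega, by omega⟩
    · right
      refine ⟨by omega, by omega, by omega⟩
  · -- Part 2
    intro u w₁ w₂ d hne h1 h2
    constructor
    · rintro ⟨hd1, hd2⟩
      obtain ⟨W₁, hW₁⟩ := hG.exists_walk_length_eq_dist w₁ u
      obtain ⟨W₂, hW₂⟩ := hG.exists_walk_length_eq_dist u w₂
      refine ⟨Walk.cons h1 (W₁.append (W₂.append (Walk.cons h2.symm Walk.nil))), ?_, ?_⟩
      · rw [Walk.support_cons]
        refine List.mem_cons_of_mem _ ?_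
        rw [Walk.mem_support_append_iff]
        exact Or.inl W₁.end_mem_support
      · have e1 : W₁.length = G.dist u w₁ := by rw [hW₁, SimpleGraph.dist_comm]
        simp only [Walk.length_cons, Walk.length_append, Walk.length_nil]
        omega
    · rintro ⟨hd1, hd2⟩
      obtain ⟨W₁, hW₁⟩ := hG.exists_walk_length_eq_dist w₁ u
      obtain ⟨W₂, hW₂⟩ := hG.exists_walk_length_eq_dist u w₂
      refine ⟨Walk.cons h1 (W₁.append (W₂.append (Walk.cons h2.symm Walk.nil))), ?_, ?_⟩
      · rw [Walk.support_cons]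
        refine List.mem_cons_of_mem _ ?_
        rw [Walk.mem_support_append_iff]
        exact Or.inl W₁.end_mem_support
      · have e1 : W₁.length = G.dist u w₁ := by rw [hW₁, SimpleGraph.dist_comm]
        simp only [Walk.length_cons, Walk.length_append, Walk.length_nil]
        omega
end
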